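/- If T is a spanning tree of an acyclic directed complete graph G on {0,...,n} and s is a permutation of {1,...,n}, then reorienting T according to the total order 0 < s(1) < ... < s(n) yields the rooted-at-0 orientation of T (i.e., every edge directed away from 0 along tree paths) if and only if the total order induced by s is a linear extension of the tree order ≺_T. -/

import Mathlib

/-- The relation induced on `{0,…,n}` by a spanning tree `T` rooted at `0`:
`i ≺_T j` iff `i ≠ j` and `i` lies on the (unique) path in `T` from `0` to `j`. -/
def treeOrder {n : ℕ} (T : SimpleGraph (Fin (n + 1))) :
    Fin (n + 1) → Fin (n + 1) → Prop :=
  fun i j => i ≠ j ∧ ∀ p : T.Walk 0 j, p.IsPath → i ∈ p.support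

open SimpleGraph Walk

/-- Let `T` be a spanning tree of the (acyclically oriented) complete graph `G` on
`{0,…,n}` and `s` a permutation of `{1,…,n}` (encoded by `g` with `g 0 = 0`,
`g i = s(i)`).  Reorienting `T` according to the total order `0 < s(1) < ⋯ < s(n)`
(each edge `{a,b}` directed `a → b` iff `a` precedes `b` in that order) yields the
rooted-at-`0` orientation `T_on` of `T` (each edge directed away from `0` along
tree paths, i.e. each edge `{a,b}` directed `a → b` iff `a ≺_T b`) if and only if
the total order induced by `s` is a linear extension of the tree order `≺_T`. -/


lemma aux_concat_path {n : ℕ} {T : SimpleGraph (Fin (n + 1))} {u v w : Fin (n+1)}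
    {p : T.Walk u v} (hp : p.IsPath) (h : T.Adj v w) (hw : w ∉ p.support) :
    (p.concat h).IsPath := by
  rw [← Walk.isPath_reverse_iff, Walk.reverse_concat]
  exact (hp.reverse).cons (by simpa using hw)

lemma aux_lt {n : ℕ} {T : SimpleGraph (Fin (n + 1))} (hT : T.IsTree)
    {g : Equiv.Perm (Fin (n + 1))}
    (H : ∀ a b, T.Adj a b → treeOrder T a b → g.symm a < g.symm b)
    {b : Fin (n+1)} (p : T.Walk 0 b) (hp : p.IsPath) :
    ∀ u ∈ p.support, u ≠ b → g.symm u < g.symm b := by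
  suffices key : ∀ (r b : Fin (n+1)) (p : T.Walk r b), r = 0 → p.IsPath →
      ∀ u ∈ p.support, u ≠ b → g.symm u < g.symm b from key 0 b p rfl hp
  intro r b p
  induction p using SimpleGraph.Walk.concatRec with
  | Hnil =>
    intro _ _ u hu hub
    simp at hu
    exact absurd hu hub
  | Hconcat q h ih =>
    rename_i c b
    intro hr hp
    subst hr
    have hq : q.IsPath := by
      rw [← Walk.isPath_reverse_iff]
      have := hp
      rw [← Walk.isPath_reverse_iff, Walk.reverse_concat] at this
      exact this.of_cons
    have hbq : b ∉ q.support := by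
      have := hp
      rw [← Walk.isPath_reverse_iff, Walk.reverse_concat, Walk.cons_isPath_iff] at this
      simpa using this.2
    have hcb : g.symm c < g.symm b := by
      refine H c b h ⟨fun hcb => hbq (hcb ▸ Walk.end_mem_support q), ?_⟩
      intro p' hp'
      have : p' = q.concat h :=
        (hT.existsUnique_path 0 b).unique hp' (aux_concat_path hq h hbq)
      rw [this, Walk.support_concat]
      exact List.mem_append_left _ (Walk.end_mem_support q)
    intro u hu hub
    rw [Walk.support_concat, List.mem_append] at hu
    have huq : u ∈ q.support := by
      rcases hu with h' | h'
      · exact h'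
      · simp at h'; exact absurd h' hub
    by_cases huc : u = c
    · exact huc ▸ hcb
    · exact lt_trans (ih rfl hq u huq huc) hcb

lemma aux_dich {n : ℕ} {T : SimpleGraph (Fin (n + 1))} (hT : T.IsTree)
    {a b : Fin (n+1)} (hab : T.Adj a b) : treeOrder T a b ∨ treeOrder T b a := by
  obtain ⟨p, hp⟩ := (hT.existsUnique_path 0 a).exists
  by_cases hbp : b ∈ p.support
  · right
    refine ⟨hab.ne', ?_⟩
    intro q hq
    rw [(hT.existsUnique_path 0 a).unique hq hp]
    exact hbp
  · left
    refine ⟨hab.ne, ?_⟩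
    intro q hq
    have : q = p.concat hab :=
      (hT.existsUnique_path 0 b).unique hq (aux_concat_path hp hab hbp)
    rw [this, Walk.support_concat]
    exact List.mem_append_left _ (Walk.end_mem_support p)

theorem stmt_8 (n : ℕ) (T : SimpleGraph (Fin (n + 1))) (hT : T.IsTree)
    (g : Equiv.Perm (Fin (n + 1))) (hg : g 0 = 0) :
    (∀ a b, T.Adj a b → (g.symm a < g.symm b ↔ treeOrder T a b)) ↔
      (∀ a b, treeOrder T a b → g.symm a < g.symm b) := by
  constructor
  · intro H a b hab
    obtain ⟨p, hp⟩ := (hT.existsUnique_path 0 b).exists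
    exact aux_lt hT (fun x y hxy ht => (H x y hxy).mpr ht) p hp a (hab.2 p hp) hab.1
  · intro H a b hab
    constructor
    · intro hlt
      rcases aux_dich hT hab with h | h
      · exact h
      · exact absurd (H b a h) (asymm hlt)
    · exact H a b
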